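/- Suppose k ≥ 2, m = k+1, and let q ≥ 1 be an integer. If there exists a proportional and strategyproof committee rule for q·k voters (with m candidates and committee size k), then there also exists a proportional and strategyproof committee rule for k voters (with m candidates and committee size k). -/

import Mathlib

open scoped Classical

/-!
Common framework: candidates are `Fin m`, voters are `Fin n`, committee size `k`.
An approval ballot is a nonempty proper subset of the candidate set.
"at least n/k voters" is encoded as `n ≤ k * (number of such voters)`,
and "strictly more than n/(k+1) voters" as `n < (k+1) * (number of such voters)`.
-/

/-- A valid approval ballot: a nonempty proper subset of the candidate set. -/
def ValidBallot (m : ℕ) (A : Finset (Fin m)) : Prop :=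
  A.Nonempty ∧ A ≠ Finset.univ

/-- A valid profile: every voter submits a valid ballot, and the ballots jointly
approve at least `k` candidates (so the committee can be filled with approved candidates). -/
def ValidProfile (m n k : ℕ) (P : Fin n → Finset (Fin m)) : Prop :=
  (∀ i, ValidBallot m (P i)) ∧ k ≤ (Finset.univ.biUnion P).card

/-- `f` is an (approval-based) committee rule: on every valid profile it returns a
committee of cardinality `k`. -/
def IsCommitteeRule (m n k : ℕ) (f : (Fin n → Finset (Fin m)) → Finset (Fin m)) : Prop :=
  ∀ P, ValidProfile m n k P → (f P).card = k

/-- `P'` is an `i`-variant of `P`: they agree on all voters other than `i`. -/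
def IVariant {m n : ℕ} (P P' : Fin n → Finset (Fin m)) (i : Fin n) : Prop :=
  ∀ j, j ≠ i → P' j = P j

/-- Strategyproofness: a voter reporting a proper subset of her truthful ballot never
obtains a committee whose intersection with her truthful ballot strictly grows. -/
def Strategyproof (m n k : ℕ) (f : (Fin n → Finset (Fin m)) → Finset (Fin m)) : Prop :=
  ∀ P P' (i : Fin n), ValidProfile m n k P → ValidProfile m n k P' →
    IVariant P P' i → P' i ⊂ P i → ¬ (f P ∩ P i ⊂ f P' ∩ P i)

/-- Superset-strategyproofness: no i-variant (with arbitrary new ballot) yields a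
committee whose intersection with the truthful ballot strictly grows. -/
def SupersetStrategyproof (m n k : ℕ) (f : (Fin n → Finset (Fin m)) → Finset (Fin m)) : Prop :=
  ∀ P P' (i : Fin n), ValidProfile m n k P → ValidProfile m n k P' →
    IVariant P P' i → ¬ (f P ∩ P i ⊂ f P' ∩ P i)

/-- Cardinality-strategyproofness: no i-variant yields a committee containing strictly
more of the truthfully approved candidates. -/
def CardinalityStrategyproof (m n k : ℕ) (f : (Fin n → Finset (Fin m)) → Finset (Fin m)) : Prop :=
  ∀ P P' (i : Fin n), ValidProfile m n k P → ValidProfile m n k P' →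
    IVariant P P' i → ¬ ((f P ∩ P i).card < (f P' ∩ P i).card)

/-- Hamming-strategyproofness: no i-variant yields a committee at strictly smaller
Hamming distance (cardinality of the symmetric difference) from the truthful ballot. -/
def HammingStrategyproof (m n k : ℕ) (f : (Fin n → Finset (Fin m)) → Finset (Fin m)) : Prop :=
  ∀ P P' (i : Fin n), ValidProfile m n k P → ValidProfile m n k P' →
    IVariant P P' i → ¬ ((symmDiff (f P') (P i)).card < (symmDiff (f P) (P i)).card)

/-- A party-list profile: any two ballots are either equal or disjoint. -/
def PartyList {m n : ℕ} (P : Fin n → Finset (Fin m)) : Prop :=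
  ∀ i j, P i = P j ∨ Disjoint (P i) (P j)

/-- Proportionality: in a party-list profile where some singleton ballot `{c}` is
submitted by at least `n/k` voters, `c` is elected. -/
def Proportional (m n k : ℕ) (f : (Fin n → Finset (Fin m)) → Finset (Fin m)) : Prop :=
  ∀ P, ValidProfile m n k P → PartyList P →
    ∀ c : Fin m, n ≤ k * (Finset.univ.filter (fun i => P i = {c})).card → c ∈ f P

/-- Droop proportionality: in ANY profile where some singleton ballot `{c}` is submitted
by strictly more than `n/(k+1)` voters, `c` is elected. -/
def DroopProportional (m n k : ℕ) (f : (Fin n → Finset (Fin m)) → Finset (Fin m)) : Prop :=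
  ∀ P, ValidProfile m n k P →
    ∀ c : Fin m, n < (k + 1) * (Finset.univ.filter (fun i => P i = {c})).card → c ∈ f P

/-- Justified representation on party lists: in a party-list profile where some ballot `A`
is submitted by at least `n/k` voters, the committee intersects `A`. -/
def JROnPartyLists (m n k : ℕ) (f : (Fin n → Finset (Fin m)) → Finset (Fin m)) : Prop :=
  ∀ P, ValidProfile m n k P → PartyList P →
    ∀ A : Finset (Fin m), n ≤ k * (Finset.univ.filter (fun i => P i = A)).card →
      (f P ∩ A).Nonempty

/-- Justified representation: every group of at least `n/k` voters that jointly approve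
some common candidate is represented by at least one committee member approved by a
group member. -/
def JR (m n k : ℕ) (f : (Fin n → Finset (Fin m)) → Finset (Fin m)) : Prop :=
  ∀ P, ValidProfile m n k P → ∀ N' : Finset (Fin n),
    n ≤ k * N'.card → (∃ c : Fin m, ∀ i ∈ N', c ∈ P i) →
    (f P ∩ N'.biUnion P).Nonempty

/-- Disjoint diversity: in a party-list profile with at most `k` distinct parties,
the committee contains a member of each party. -/
def DisjointDiversity (m n k : ℕ) (f : (Fin n → Finset (Fin m)) → Finset (Fin m)) : Prop :=
  ∀ P, ValidProfile m n k P → PartyList P →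
    (Finset.univ.image P).card ≤ k → ∀ i : Fin n, (f P ∩ P i).Nonempty

/-- Weak efficiency: a candidate approved by no voter is never elected
(on profiles where the committee can be filled with approved candidates). -/
def WeakEfficiency (m n k : ℕ) (f : (Fin n → Finset (Fin m)) → Finset (Fin m)) : Prop :=
  ∀ P, ValidProfile m n k P → ∀ c : Fin m, (∀ i, c ∉ P i) → c ∉ f P

/-- The approval score of candidate `c`: the number of voters approving `c`. -/
def avScore (m n : ℕ) (P : Fin n → Finset (Fin m)) (c : Fin m) : ℕ :=
  (Finset.univ.filter (fun i => c ∈ P i)).card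

/-- `W` is the committee selected by Approval Voting with lexicographic tie-breaking:
it has size `k`, and every member beats every non-member, either by a strictly higher
approval score or by equal score and smaller index (lexicographic tie-breaking with
respect to the fixed linear order on the candidates `Fin m`). -/
def IsAVCommittee (m n k : ℕ) (P : Fin n → Finset (Fin m)) (W : Finset (Fin m)) : Prop :=
  W.card = k ∧ ∀ c ∈ W, ∀ d : Fin m, d ∉ W →
    (avScore m n P d < avScore m n P c ∨ (avScore m n P d = avScore m n P c ∧ c < d))

/-- Approval Voting with lexicographic tie-breaking: selects the `k` candidates with
highest approval score, breaking ties in favour of lexicographically smaller candidates. -/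
noncomputable def AV (m n k : ℕ) (P : Fin n → Finset (Fin m)) : Finset (Fin m) :=
  if h : ∃ W, IsAVCommittee m n k P W then h.choose else ∅

/-- The harmonic number `H r = 1 + 1/2 + ⋯ + 1/r`, with `H 0 = 0`. -/
def harm : ℕ → ℚ
  | 0 => 0
  | r + 1 => harm r + 1 / (r + 1)

/-- The PAV score of committee `W` in profile `P`: `∑ᵢ H(|P i ∩ W|)`. -/
def pavScore (m n : ℕ) (P : Fin n → Finset (Fin m)) (W : Finset (Fin m)) : ℚ :=
  ∑ i, harm ((P i ∩ W).card)

/-- Encoding used for lexicographic comparison of committees: a committee is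
lexicographically earlier iff its encoding is larger. -/
def pavEncode (m : ℕ) (W : Finset (Fin m)) : ℕ :=
  ∑ c ∈ W, 2 ^ (m - 1 - (c : ℕ))

/-- `W` is the PAV winner: a size-`k` committee maximizing the PAV score, and the
lexicographically first among all such maximizers. -/
def IsPAVWinner (m n k : ℕ) (P : Fin n → Finset (Fin m)) (W : Finset (Fin m)) : Prop :=
  W.card = k ∧
  (∀ W' : Finset (Fin m), W'.card = k → pavScore m n P W' ≤ pavScore m n P W) ∧
  (∀ W' : Finset (Fin m), W'.card = k → pavScore m n P W' = pavScore m n P W →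
    pavEncode m W' ≤ pavEncode m W)

/-- Proportional Approval Voting, breaking ties by the lexicographically first optimum. -/
noncomputable def PAV (m n k : ℕ) (P : Fin n → Finset (Fin m)) : Finset (Fin m) :=
  if h : ∃ W, IsPAVWinner m n k P W then h.choose else ∅

/-- **Lemma 3 (induction step on `n`).** Suppose `k ≥ 2`, `m = k + 1`, and `q ≥ 1`.
If there exists a proportional and strategyproof committee rule for `q * k` voters,
then there also exists such a rule for `k` voters. -/

lemma erase_ssub_erase {α} [DecidableEq α] (A : Finset α) (x x' : α) :
    A.erase x ⊂ A.erase x' ↔ x ∈ A ∧ x' ∉ A := by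
  constructor
  · intro h
    have hc := Finset.card_lt_card h
    by_cases hx : x ∈ A
    · refine ⟨hx, fun hx' => ?_⟩
      rw [Finset.card_erase_of_mem hx, Finset.card_erase_of_mem hx'] at hc
      omega
    · rw [Finset.erase_eq_of_notMem hx] at hc
      have := Finset.card_erase_le (s := A) (a := x')
      omega
  · rintro ⟨hx, hx'⟩
    rw [Finset.erase_eq_of_notMem hx']
    exact Finset.erase_ssubset hx

lemma inter_as_erase {k : ℕ} (W : Finset (Fin (k+1))) (hW : W.card = k) :
    ∃ x, ∀ B : Finset (Fin (k+1)), W ∩ B = B.erase x := by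
  have hc : Wᶜ.card = 1 := by
    rw [Finset.card_compl, hW, Fintype.card_fin]; omega
  obtain ⟨x, hx⟩ := Finset.card_eq_one.mp hc
  refine ⟨x, fun B => ?_⟩
  ext c
  have : c ∈ W ↔ c ≠ x := by
    rw [← Finset.notMem_compl, hx, Finset.mem_singleton]
  simp [Finset.mem_erase, Finset.mem_inter, this]

lemma key_trans {k : ℕ} (A W₁ W₂ W₃ : Finset (Fin (k+1)))
    (h1 : W₁.card = k) (h2 : W₂.card = k) (h3 : W₃.card = k)
    (h12 : ¬ (W₁ ∩ A ⊂ W₂ ∩ A)) (h23 : ¬ (W₂ ∩ A ⊂ W₃ ∩ A)) :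
    ¬ (W₁ ∩ A ⊂ W₃ ∩ A) := by
  obtain ⟨x₁, e₁⟩ := inter_as_erase W₁ h1
  obtain ⟨x₂, e₂⟩ := inter_as_erase W₂ h2
  obtain ⟨x₃, e₃⟩ := inter_as_erase W₃ h3
  rw [e₁, e₂, erase_ssub_erase] at h12
  rw [e₂, e₃, erase_ssub_erase] at h23
  rw [e₁, e₃, erase_ssub_erase]; tauto

lemma clone_count (q k : ℕ) (p : Fin k → Prop) [DecidablePred p] :
    (Finset.univ.filter (fun j : Fin (q*k) => p ((finProdFinEquiv.symm j).2))).card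
      = q * (Finset.univ.filter p).card := by
  have h1 : (Finset.univ.filter (fun j : Fin (q*k) => p ((finProdFinEquiv.symm j).2)))
      = (Finset.univ.filter (fun x : Fin q × Fin k => p x.2)).image finProdFinEquiv := by
    ext j
    simp only [Finset.mem_image, Finset.mem_filter, Finset.mem_univ, true_and]
    constructor
    · intro h; exact ⟨finProdFinEquiv.symm j, h, Equiv.apply_symm_apply _ _⟩
    · rintro ⟨x, hx, rfl⟩; rwa [Equiv.symm_apply_apply]
  rw [h1, Finset.card_image_of_injective _ finProdFinEquiv.injective]
  have h2 : (Finset.univ.filter (fun x : Fin q × Fin k => p x.2))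
      = (Finset.univ : Finset (Fin q)) ×ˢ (Finset.univ.filter p) := by
    ext ⟨a, b⟩; simp
  rw [h2, Finset.card_product, Finset.card_univ, Fintype.card_fin]

noncomputable section CloneAux
open scoped Classical

/-- Clone profile: each of the `k` voters is replicated `q` times. -/
def cloneProf (m q k : ℕ) (P : Fin k → Finset (Fin m)) : Fin (q * k) → Finset (Fin m) :=
  fun j => P ((finProdFinEquiv.symm j).2)

lemma cloneProf_count (m q k : ℕ) (P : Fin k → Finset (Fin m)) (A : Finset (Fin m)) :
    (Finset.univ.filter (fun j => cloneProf m q k P j = A)).card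
      = q * (Finset.univ.filter (fun i => P i = A)).card := by
  classical
  have h1 : (Finset.univ.filter (fun j : Fin (q*k) => cloneProf m q k P j = A))
      = (Finset.univ.filter (fun x : Fin q × Fin k => P x.2 = A)).image finProdFinEquiv := by
    ext j
    simp only [Finset.mem_image, Finset.mem_filter, Finset.mem_univ, true_and]; simp only [cloneProf]
    constructor
    · intro h; exact ⟨finProdFinEquiv.symm j, h, Equiv.apply_symm_apply _ _⟩
    · rintro ⟨x, hx, rfl⟩; rwa [Equiv.symm_apply_apply]
  rw [h1, Finset.card_image_of_injective _ finProdFinEquiv.injective]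
  have h2 : (Finset.univ.filter (fun x : Fin q × Fin k => P x.2 = A))
      = (Finset.univ : Finset (Fin q)) ×ˢ (Finset.univ.filter (fun i => P i = A)) := by
    ext ⟨a, b⟩; simp
  rw [h2, Finset.card_product, Finset.card_univ, Fintype.card_fin]

lemma cloneProf_biUnion (m q k : ℕ) (hq : 0 < q) (P : Fin k → Finset (Fin m)) :
    Finset.univ.biUnion (cloneProf m q k P) = Finset.univ.biUnion P := by
  ext c
  simp only [Finset.mem_biUnion, Finset.mem_univ, true_and, cloneProf]
  constructor
  · rintro ⟨j, hj⟩; exact ⟨_, hj⟩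
  · rintro ⟨i0, hi0⟩
    exact ⟨finProdFinEquiv (⟨0, hq⟩, i0), by rw [Equiv.symm_apply_apply]; exact hi0⟩

lemma cloneProf_valid (m q k κ : ℕ) (hq : 0 < q) (P : Fin k → Finset (Fin m))
    (hP : ValidProfile m k κ P) : ValidProfile m (q*k) κ (cloneProf m q k P) :=
  ⟨fun _ => hP.1 _, by rw [cloneProf_biUnion m q k hq]; exact hP.2⟩

lemma cloneProf_partylist (m q k : ℕ) (P : Fin k → Finset (Fin m)) (h : PartyList P) :
    PartyList (cloneProf m q k P) := fun a b => h _ _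

/-- Interpolating profiles for the strategyproofness chaining argument:
the first `t` clones of voter `i` report `B`, all other clones report truthfully. -/
def interp (m q k : ℕ) (P : Fin k → Finset (Fin m)) (B : Finset (Fin m)) (i : Fin k) (t : ℕ) :
    Fin (q * k) → Finset (Fin m) :=
  fun j => if (finProdFinEquiv.symm j).2 = i ∧ ((finProdFinEquiv.symm j).1 : ℕ) < t then B
           else P ((finProdFinEquiv.symm j).2)

lemma interp_zero (m q k : ℕ) (P : Fin k → Finset (Fin m)) (B : Finset (Fin m)) (i : Fin k) :
    interp m q k P B i 0 = cloneProf m q k P := by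
  funext j; simp [interp, cloneProf]

lemma interp_last (m q k : ℕ) (P P' : Fin k → Finset (Fin m)) (i : Fin k)
    (hvar : ∀ j, j ≠ i → P' j = P j) :
    interp m q k P (P' i) i q = cloneProf m q k P' := by
  funext j
  unfold interp cloneProf
  by_cases h : (finProdFinEquiv.symm j).2 = i
  · rw [if_pos ⟨h, (finProdFinEquiv.symm j).1.isLt⟩, h]
  · rw [if_neg (fun hc => h hc.1), hvar _ h]

lemma interp_valid (m q k κ : ℕ) (hq : 0 < q) (P P' : Fin k → Finset (Fin m)) (i : Fin k)
    (hP : ValidProfile m k κ P) (hP' : ValidProfile m k κ P')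
    (hvar : ∀ j, j ≠ i → P' j = P j) (t : ℕ) :
    ValidProfile m (q*k) κ (interp m q k P (P' i) i t) := by
  constructor
  · intro j
    unfold interp
    split
    · exact hP'.1 i
    · exact hP.1 _
  · rcases Nat.eq_zero_or_pos t with rfl | ht
    · rw [interp_zero]
      exact (cloneProf_valid m q k κ hq P hP).2
    · have hsub : Finset.univ.biUnion P' ⊆ Finset.univ.biUnion (interp m q k P (P' i) i t) := by
        intro c hc
        simp only [Finset.mem_biUnion, Finset.mem_univ, true_and] at hc ⊢
        obtain ⟨i0, hi0⟩ := hc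
        by_cases hii : i0 = i
        · refine ⟨finProdFinEquiv (⟨0, hq⟩, i), ?_⟩
          unfold interp
          rw [Equiv.symm_apply_apply]
          rw [if_pos ⟨rfl, ht⟩, ← hii]; exact hi0
        · refine ⟨finProdFinEquiv (⟨0, hq⟩, i0), ?_⟩
          unfold interp
          rw [Equiv.symm_apply_apply]
          rw [if_neg (fun hc => hii hc.1), ← hvar i0 hii]; exact hi0
      exact le_trans hP'.2 (Finset.card_le_card hsub)

lemma interp_ivariant (m q k : ℕ) (P : Fin k → Finset (Fin m)) (B : Finset (Fin m)) (i : Fin k)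
    (t : ℕ) (ht : t < q) :
    IVariant (interp m q k P B i t) (interp m q k P B i (t+1)) (finProdFinEquiv (⟨t, ht⟩, i)) := by
  intro j hj
  unfold interp
  by_cases h2 : (finProdFinEquiv.symm j).2 = i
  · have h1 : ((finProdFinEquiv.symm j).1 : ℕ) ≠ t := by
      intro h
      apply hj
      have hx : finProdFinEquiv.symm j = (⟨t, ht⟩, i) := Prod.ext (Fin.ext h) h2
      rw [Equiv.symm_apply_eq] at hx
      exact hx
    by_cases h3 : ((finProdFinEquiv.symm j).1 : ℕ) < t
    · rw [if_pos ⟨h2, by omega⟩, if_pos ⟨h2, h3⟩]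
    · rw [if_neg (by rintro ⟨-, hlt⟩; omega), if_neg (by rintro ⟨-, hlt⟩; exact h3 hlt)]
  · rw [if_neg (fun hc => h2 hc.1), if_neg (fun hc => h2 hc.1)]

lemma interp_at_cur (m q k : ℕ) (P : Fin k → Finset (Fin m)) (B : Finset (Fin m)) (i : Fin k)
    (t : ℕ) (ht : t < q) :
    interp m q k P B i t (finProdFinEquiv (⟨t, ht⟩, i)) = P i := by
  unfold interp
  rw [Equiv.symm_apply_apply]
  simp

lemma interp_at_next (m q k : ℕ) (P : Fin k → Finset (Fin m)) (B : Finset (Fin m)) (i : Fin k)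
    (t : ℕ) (ht : t < q) :
    interp m q k P B i (t+1) (finProdFinEquiv (⟨t, ht⟩, i)) = B := by
  unfold interp
  rw [Equiv.symm_apply_apply]
  simp

end CloneAux

theorem induction_step_n (k q : ℕ) (hk : 2 ≤ k) (hq : 1 ≤ q) :
    (∃ f : (Fin (q * k) → Finset (Fin (k + 1))) → Finset (Fin (k + 1)),
        IsCommitteeRule (k + 1) (q * k) k f ∧ Proportional (k + 1) (q * k) k f ∧
        Strategyproof (k + 1) (q * k) k f) →
    (∃ f : (Fin k → Finset (Fin (k + 1))) → Finset (Fin (k + 1)),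
        IsCommitteeRule (k + 1) k k f ∧ Proportional (k + 1) k k f ∧
        Strategyproof (k + 1) k k f) := by
  rintro ⟨f, hrule, hprop, hsp⟩
  have hq0 : 0 < q := hq
  refine ⟨fun P => f (cloneProf (k+1) q k P), ?_, ?_, ?_⟩
  · intro P hP
    exact hrule _ (cloneProf_valid _ _ _ _ hq0 P hP)
  · intro P hP hPL c hcnt
    have hpos : 0 < (Finset.univ.filter (fun i => P i = ({c} : Finset (Fin (k+1))))).card := by
      rcases Nat.eq_zero_or_pos (Finset.univ.filter (fun i => P i = ({c} : Finset (Fin (k+1))))).card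
        with h | h
      · rw [h, Nat.mul_zero] at hcnt; omega
      · exact h
    apply hprop _ (cloneProf_valid _ _ _ _ hq0 P hP) (cloneProf_partylist _ _ _ P hPL) c
    rw [cloneProf_count]
    calc q * k = q * k * 1 := (Nat.mul_one _).symm
      _ ≤ q * k * (Finset.univ.filter (fun i => P i = ({c} : Finset (Fin (k+1))))).card :=
          Nat.mul_le_mul_left _ hpos
      _ = k * (q * (Finset.univ.filter (fun i => P i = ({c} : Finset (Fin (k+1))))).card) := by ring
  · intro P P' i hP hP' hvar hsub hcon
    have hval : ∀ t, ValidProfile (k+1) (q*k) k (interp (k+1) q k P (P' i) i t) :=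
      fun t => interp_valid _ _ _ _ hq0 P P' i hP hP' hvar t
    have hcard : ∀ t, (f (interp (k+1) q k P (P' i) i t)).card = k :=
      fun t => hrule _ (hval t)
    have chain : ∀ t, t ≤ q →
        ¬ (f (interp (k+1) q k P (P' i) i 0) ∩ P i ⊂ f (interp (k+1) q k P (P' i) i t) ∩ P i) := by
      intro t
      induction t with
      | zero => exact fun _ h => ssubset_irrefl _ h
      | succ s ih =>
        intro hsq
        have hs : s < q := hsq
        have hstep : ¬ (f (interp (k+1) q k P (P' i) i s) ∩ P i
            ⊂ f (interp (k+1) q k P (P' i) i (s+1)) ∩ P i) := by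
          have hm := hsp (interp (k+1) q k P (P' i) i s) (interp (k+1) q k P (P' i) i (s+1))
            (finProdFinEquiv (⟨s, hs⟩, i)) (hval s) (hval (s+1))
            (interp_ivariant _ _ _ P (P' i) i s hs)
            (by rw [interp_at_cur _ _ _ P (P' i) i s hs, interp_at_next _ _ _ P (P' i) i s hs]
                exact hsub)
          rwa [interp_at_cur _ _ _ P (P' i) i s hs] at hm
        exact key_trans (P i) _ _ _ (hcard 0) (hcard s) (hcard (s+1)) (ih (le_of_lt hs)) hstep
    apply chain q le_rfl
    rw [interp_zero, interp_last _ _ _ P P' i hvar]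
    exact hcon
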